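/- Let (A_n)_{n≥3} be a sequence where A_n is a tie-free n×n real matrix with unit Euclidean norm rows satisfying β(A_n) ≥ √(2·log(2n)) − log(log(2n))/√(2·log(2n)). Then the ratio β(A_n) / (2·Σ_{i=1}^n √(W1[1_{S_i(A_n)}])) tends to 1 as n → ∞. -/

import Mathlib

open Finset

noncomputable section
open scoped Classical

/-- The sign `±1` associated to a Boolean. -/
def sgn (b : Bool) : ℝ := if b then 1 else -1

/-- The hypercube `{-1,1}^n` as a finite set of vectors in `ℝ^n`. -/
def cube (n : ℕ) : Finset (Fin n → ℝ) :=
  (Finset.univ : Finset (Fin n → Bool)).image (fun ε i => sgn (ε i))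

/-- `β(A) = 2^{-n} ∑_{x ∈ {-1,1}^n} ‖Ax‖_∞` (the `Pi` norm on `Fin n → ℝ` is the sup norm). -/
def badBeta {n : ℕ} (A : Matrix (Fin n) (Fin n) ℝ) : ℝ :=
  (2 ^ n : ℝ)⁻¹ * ∑ x ∈ cube n, ‖A.mulVec x‖

/-- The cell `S_i(A) = {x ∈ {-1,1}^n : ‖Ax‖_∞ = ⟨a_i, x⟩}`. -/
def cellS {n : ℕ} (A : Matrix (Fin n) (Fin n) ℝ) (i : Fin n) : Finset (Fin n → ℝ) :=
  (cube n).filter (fun x => ‖A.mulVec x‖ = ∑ j, A i j * x j)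

/-- `A` is tie-free: no two distinct rows attain the same absolute inner product with a
hypercube vertex. -/
def TieFree {n : ℕ} (A : Matrix (Fin n) (Fin n) ℝ) : Prop :=
  ∀ x ∈ cube n, ∀ i j : Fin n, i ≠ j →
    (∑ k, A i k * x k) ^ 2 ≠ (∑ k, A j k * x k) ^ 2

/-- Level-1 Fourier weight of `f : {-1,1}^n → ℝ`. -/
def W1 {n : ℕ} (f : (Fin n → ℝ) → ℝ) : ℝ :=
  ∑ i : Fin n, ((2 ^ n : ℝ)⁻¹ * ∑ x ∈ cube n, f x * x i) ^ 2


lemma mem_cube {n : ℕ} {x : Fin n → ℝ} : x ∈ cube n ↔ ∀ i, x i = 1 ∨ x i = -1 := by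
  constructor
  · rintro hx i
    simp only [cube, mem_image] at hx
    obtain ⟨ε, -, rfl⟩ := hx
    by_cases h : ε i <;> simp [sgn, h]
  · intro h
    simp only [cube, mem_image]
    refine ⟨fun i => decide (x i = 1), mem_univ _, funext fun i => ?_⟩
    rcases h i with h1 | h1
    · simp [sgn, h1]
    · have hne : ¬ (x i = 1) := by rw [h1]; norm_num
      simp [sgn, h1, hne]
      exact fun hc => absurd hc (by norm_num)

lemma sgn_inj {n : ℕ} : Function.Injective (fun (ε : Fin n → Bool) (i : Fin n) => sgn (ε i)) := by
  intro ε ε' h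
  funext i
  have h2 : sgn (ε i) = sgn (ε' i) := congrFun h i
  rcases Bool.eq_false_or_eq_true (ε i) with h1 | h1 <;>
    rcases Bool.eq_false_or_eq_true (ε' i) with h3 | h3 <;>
    rw [h1, h3] at h2 ⊢ <;> simp [sgn] at h2 ⊢ <;> norm_num at h2

lemma card_cube (n : ℕ) : (cube n).card = 2 ^ n := by
  rw [cube, Finset.card_image_of_injective _ sgn_inj, Finset.card_univ]
  simp

lemma neg_mem_cube {n : ℕ} {x : Fin n → ℝ} (hx : x ∈ cube n) : -x ∈ cube n := by
  rw [mem_cube] at hx ⊢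
  intro i
  rcases hx i with h | h <;> simp [h]

lemma sum_cube {n : ℕ} (g : (Fin n → ℝ) → ℝ) :
    ∑ x ∈ cube n, g x = ∑ ε : Fin n → Bool, g (fun i => sgn (ε i)) := by
  rw [cube, Finset.sum_image (fun a _ b _ h => sgn_inj h)]

lemma mulVec_apply {n : ℕ} (A : Matrix (Fin n) (Fin n) ℝ) (x : Fin n → ℝ) (i : Fin n) :
    A.mulVec x i = ∑ j, A i j * x j := by
  simp [Matrix.mulVec, dotProduct]

lemma mem_cellS {n : ℕ} {A : Matrix (Fin n) (Fin n) ℝ} {i : Fin n} {x : Fin n → ℝ} :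
    x ∈ cellS A i ↔ x ∈ cube n ∧ ‖A.mulVec x‖ = A.mulVec x i := by
  rw [cellS, mem_filter, mulVec_apply]

lemma abs_le_normPi {n : ℕ} (v : Fin n → ℝ) (i : Fin n) : |v i| ≤ ‖v‖ := by
  simpa [Real.norm_eq_abs] using norm_le_pi_norm v i

lemma exists_norm_eq_abs {n : ℕ} (hn : 0 < n) (v : Fin n → ℝ) : ∃ i, ‖v‖ = |v i| := by
  have : Nonempty (Fin n) := ⟨⟨0, hn⟩⟩
  obtain ⟨i, -, hi⟩ := Finset.exists_mem_eq_sup (univ : Finset (Fin n)) univ_nonempty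
    (fun i => ‖v i‖₊)
  refine ⟨i, ?_⟩
  rw [Pi.norm_def, hi]
  simp [Real.norm_eq_abs]

section structural
variable {n : ℕ} {A : Matrix (Fin n) (Fin n) ℝ}

lemma norm_mulVec_pos (h2 : 2 ≤ n) (htie : TieFree A) {x : Fin n → ℝ} (hx : x ∈ cube n) :
    0 < ‖A.mulVec x‖ := by
  rcases lt_or_eq_of_le (norm_nonneg (A.mulVec x)) with h | h
  · exact h
  exfalso
  have hzero : ∀ i, A.mulVec x i = 0 := by
    intro i
    have := abs_le_normPi (A.mulVec x) i
    rw [← h] at this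
    have := abs_nonneg (A.mulVec x i)
    nlinarith [abs_le_normPi (A.mulVec x) i, le_abs_self (A.mulVec x i),
      neg_abs_le (A.mulVec x i)]
  have i0 : Fin n := ⟨0, by omega⟩
  have i1 : Fin n := ⟨1, by omega⟩
  refine htie x hx ⟨0, by omega⟩ ⟨1, by omega⟩ (by simp) ?_
  rw [← mulVec_apply, ← mulVec_apply, hzero, hzero]

lemma cell_disjoint (htie : TieFree A) {i j : Fin n} (hij : i ≠ j) :
    Disjoint (cellS A i) (cellS A j) := by
  rw [Finset.disjoint_left]
  intro x hxi hxj
  rw [mem_cellS] at hxi hxj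
  refine htie x hxi.1 i j hij ?_
  rw [← mulVec_apply, ← mulVec_apply, ← hxi.2, ← hxj.2]

/-- The covered half of the cube. -/
def coveredU (A : Matrix (Fin n) (Fin n) ℝ) : Finset (Fin n → ℝ) :=
  (cube n).filter (fun x => ∃ i, x ∈ cellS A i)

lemma coveredU_eq_biUnion : coveredU A = Finset.univ.biUnion (cellS A) := by
  ext x
  simp only [coveredU, mem_filter, Finset.mem_biUnion, mem_univ, true_and]
  constructor
  · rintro ⟨-, i, hi⟩; exact ⟨i, hi⟩
  · rintro ⟨i, hi⟩; exact ⟨(mem_cellS.mp hi).1, i, hi⟩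

lemma mem_coveredU_iff_neg (h2 : 2 ≤ n) (htie : TieFree A) {x : Fin n → ℝ}
    (hx : x ∈ cube n) : x ∈ coveredU A ↔ -x ∉ coveredU A := by
  have hn : 0 < n := by omega
  have hnormneg : ‖A.mulVec (-x)‖ = ‖A.mulVec x‖ := by rw [Matrix.mulVec_neg, norm_neg]
  constructor
  · rintro hxU hnU
    rw [coveredU, mem_filter] at hxU hnU
    obtain ⟨-, i, hi⟩ := hxU
    obtain ⟨-, j, hj⟩ := hnU
    rw [mem_cellS] at hi hj
    have hpos := norm_mulVec_pos h2 htie hx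
    have hj2 : A.mulVec (-x) j = ‖A.mulVec x‖ := by rw [← hj.2, hnormneg]
    have hxj : A.mulVec x j = -‖A.mulVec x‖ := by
      rw [Matrix.mulVec_neg, Pi.neg_apply] at hj2; linarith
    by_cases hij : i = j
    · subst hij
      rw [← hi.2] at hxj
      linarith
    · refine htie x hx i j hij ?_
      rw [← mulVec_apply, ← mulVec_apply, ← hi.2, hxj]
      ring
  · intro hnU
    obtain ⟨i, hi⟩ := exists_norm_eq_abs hn (A.mulVec x)
    rcases abs_cases (A.mulVec x i) with ⟨habs, -⟩ | ⟨habs, -⟩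
    · rw [coveredU, mem_filter]
      exact ⟨hx, i, mem_cellS.mpr ⟨hx, by rw [hi, habs]⟩⟩
    · exfalso
      refine hnU ?_
      rw [coveredU, mem_filter]
      refine ⟨neg_mem_cube hx, i, mem_cellS.mpr ⟨neg_mem_cube hx, ?_⟩⟩
      rw [hnormneg, Matrix.mulVec_neg, Pi.neg_apply, hi, habs]
lemma coveredU_subset : coveredU A ⊆ cube n := Finset.filter_subset _ _

lemma sum_compl_eq (h2 : 2 ≤ n) (htie : TieFree A) (g : (Fin n → ℝ) → ℝ)
    (hg : ∀ x, g (-x) = g x) :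
    ∑ x ∈ cube n \ coveredU A, g x = ∑ x ∈ coveredU A, g x := by
  refine Finset.sum_nbij' (fun x => -x) (fun x => -x) ?_ ?_ ?_ ?_ ?_
  · intro x hx
    rw [Finset.mem_sdiff] at hx
    have := (mem_coveredU_iff_neg h2 htie hx.1)
    by_contra hc
    exact hx.2 (this.mpr (by simpa using hc))
  · intro x hx
    have hxc := coveredU_subset hx
    rw [Finset.mem_sdiff]
    exact ⟨neg_mem_cube hxc, (mem_coveredU_iff_neg h2 htie hxc).mp hx⟩
  · intro x _; simp
  · intro x _; simp
  · intro x _; exact (hg x).symm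

lemma sum_cube_eq_two_mul (h2 : 2 ≤ n) (htie : TieFree A) (g : (Fin n → ℝ) → ℝ)
    (hg : ∀ x, g (-x) = g x) :
    ∑ x ∈ cube n, g x = 2 * ∑ i, ∑ x ∈ cellS A i, g x := by
  rw [← Finset.sum_sdiff (coveredU_subset (A := A)), sum_compl_eq h2 htie g hg,
    coveredU_eq_biUnion, Finset.sum_biUnion (fun i _ j _ hij => cell_disjoint htie hij)]
  ring

lemma card_coveredU (h2 : 2 ≤ n) (htie : TieFree A) :
    2 * (coveredU A).card = 2 ^ n := by
  have h : ((cube n) \ coveredU A).card = (coveredU A).card := by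
    have := sum_compl_eq h2 htie (fun _ => (1 : ℝ)) (fun _ => rfl)
    simpa using this
  have hsub := Finset.card_sdiff_add_card_eq_card (coveredU_subset (A := A))
  rw [← card_cube n, ← hsub, h]
  ring

lemma sum_card_cells (h2 : 2 ≤ n) (htie : TieFree A) :
    2 * ∑ i, (cellS A i).card = 2 ^ n := by
  rw [← card_coveredU h2 htie, coveredU_eq_biUnion,
    Finset.card_biUnion (fun i _ j _ hij => cell_disjoint htie hij)]

end structural

/-- MGF bound for Rademacher sums. -/
lemma mgf_bound {n : ℕ} (u : Fin n → ℝ) (t : ℝ) :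
    ∑ x ∈ cube n, Real.exp (t * ∑ k, u k * x k)
      ≤ 2 ^ n * Real.exp (t ^ 2 * (∑ k, (u k) ^ 2) / 2) := by
  rw [sum_cube]
  have hstep : ∀ ε : Fin n → Bool,
      Real.exp (t * ∑ k, u k * sgn (ε k)) = ∏ k, Real.exp (t * u k * sgn (ε k)) := by
    intro ε
    rw [← Real.exp_sum, Finset.mul_sum]
    congr 1
    exact Finset.sum_congr rfl fun k _ => by ring
  calc ∑ ε : Fin n → Bool, Real.exp (t * ∑ k, u k * sgn (ε k))
      = ∑ ε : Fin n → Bool, ∏ k, Real.exp (t * u k * sgn (ε k)) := by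
        exact Finset.sum_congr rfl fun ε _ => hstep ε
    _ = ∏ k, ∑ b : Bool, Real.exp (t * u k * sgn b) := by
        rw [← Finset.sum_prod_piFinset, Fintype.piFinset_univ]
    _ ≤ ∏ k, 2 * Real.exp ((t * u k) ^ 2 / 2) := by
        refine Finset.prod_le_prod (fun k _ => ?_) (fun k _ => ?_)
        · positivity
        · have : ∑ b : Bool, Real.exp (t * u k * sgn b)
              = Real.exp (t * u k) + Real.exp (-(t * u k)) := by
            rw [Fintype.sum_bool]
            simp [sgn]
          rw [this]
          have hc := Real.cosh_le_exp_half_sq (t * u k)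
          rw [Real.cosh_eq] at hc
          linarith
    _ = 2 ^ n * Real.exp (t ^ 2 * (∑ k, (u k) ^ 2) / 2) := by
        rw [Finset.prod_mul_distrib, Finset.prod_const, ← Real.exp_sum]
        simp only [Finset.card_univ, Fintype.card_fin]
        have harg : ∑ k, (t * u k) ^ 2 / 2 = t ^ 2 * (∑ k, (u k) ^ 2) / 2 := by
          rw [← Finset.sum_div, Finset.mul_sum]
          congr 1
          exact Finset.sum_congr rfl fun k _ => by ring
        rw [harg]

/-- Truncation bound. -/
lemma truncation_bound {n : ℕ} {S : Finset (Fin n → ℝ)} (hS : S ⊆ cube n)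
    (u : Fin n → ℝ) (hu : ∑ k, (u k) ^ 2 ≤ 1) {t : ℝ} (ht : 0 < t) :
    (2 ^ n : ℝ)⁻¹ * ∑ x ∈ S, (∑ k, u k * x k)
      ≤ t * ((2 ^ n : ℝ)⁻¹ * S.card) + Real.exp (-(t ^ 2) / 2) / t := by
  have h2n : (0 : ℝ) < 2 ^ n := by positivity
  have hpt : ∀ y : ℝ, y ≤ t + Real.exp (t * y - t ^ 2) / t := by
    intro y
    have h1 : t * (y - t) + 1 ≤ Real.exp (t * (y - t)) := Real.add_one_le_exp _
    have h2 : Real.exp (t * (y - t)) = Real.exp (t * y - t ^ 2) := by ring_nf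
    rcases le_or_gt y t with h | h
    · have : 0 < Real.exp (t * y - t ^ 2) / t := by positivity
      linarith
    · have h3 : t * (y - t) ≤ Real.exp (t * y - t ^ 2) := by
        nlinarith [Real.add_one_le_exp (t * (y - t))]
      have h4 : y - t ≤ Real.exp (t * y - t ^ 2) / t := by
        rw [le_div_iff₀ ht]
        nlinarith
      linarith
  have hsum1 : ∑ x ∈ S, (∑ k, u k * x k)
      ≤ t * S.card + (∑ x ∈ S, Real.exp (t * (∑ k, u k * x k) - t ^ 2)) / t := by
    calc ∑ x ∈ S, (∑ k, u k * x k)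
        ≤ ∑ x ∈ S, (t + Real.exp (t * (∑ k, u k * x k) - t ^ 2) / t) :=
          Finset.sum_le_sum fun x _ => hpt _
      _ = t * S.card + (∑ x ∈ S, Real.exp (t * (∑ k, u k * x k) - t ^ 2)) / t := by
          rw [Finset.sum_add_distrib, Finset.sum_const, ← Finset.sum_div]
          push_cast
          ring
  have hsum2 : ∑ x ∈ S, Real.exp (t * (∑ k, u k * x k) - t ^ 2)
      ≤ 2 ^ n * Real.exp (-(t ^ 2) / 2) := by
    calc ∑ x ∈ S, Real.exp (t * (∑ k, u k * x k) - t ^ 2)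
        ≤ ∑ x ∈ cube n, Real.exp (t * (∑ k, u k * x k) - t ^ 2) :=
          Finset.sum_le_sum_of_subset_of_nonneg hS fun _ _ _ => (Real.exp_pos _).le
      _ = Real.exp (-(t ^ 2)) * ∑ x ∈ cube n, Real.exp (t * (∑ k, u k * x k)) := by
          rw [Finset.mul_sum]
          exact Finset.sum_congr rfl fun x _ => by rw [← Real.exp_add]; ring_nf
      _ ≤ Real.exp (-(t ^ 2)) * (2 ^ n * Real.exp (t ^ 2 * (∑ k, (u k) ^ 2) / 2)) := by
          exact mul_le_mul_of_nonneg_left (mgf_bound u t) (Real.exp_pos _).le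
      _ ≤ 2 ^ n * Real.exp (-(t ^ 2) / 2) := by
          rw [← mul_assoc, mul_comm (Real.exp _) ((2:ℝ) ^ n), mul_assoc, ← Real.exp_add]
          refine mul_le_mul_of_nonneg_left (Real.exp_le_exp.mpr ?_) h2n.le
          nlinarith [sq_nonneg t]
  have hfinal : ∑ x ∈ S, (∑ k, u k * x k)
      ≤ t * S.card + (2 ^ n * Real.exp (-(t ^ 2) / 2)) / t := by
    refine hsum1.trans ?_
    gcongr
  calc (2 ^ n : ℝ)⁻¹ * ∑ x ∈ S, (∑ k, u k * x k)
      ≤ (2 ^ n : ℝ)⁻¹ * (t * S.card + (2 ^ n * Real.exp (-(t ^ 2) / 2)) / t) :=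
        mul_le_mul_of_nonneg_left hfinal (by positivity)
    _ = t * ((2 ^ n : ℝ)⁻¹ * S.card) + Real.exp (-(t ^ 2) / 2) / t := by
        field_simp

section fourier
variable {n : ℕ} (A : Matrix (Fin n) (Fin n) ℝ)

/-- Level-1 Fourier coefficient of the indicator of the `i`-th cell. -/
def fc (i k : Fin n) : ℝ :=
  (2 ^ n : ℝ)⁻¹ * ∑ x ∈ cellS A i, x k

lemma fc_eq (i k : Fin n) :
    (2 ^ n : ℝ)⁻¹ * ∑ x ∈ cube n, (if x ∈ cellS A i then (1:ℝ) else 0) * x k = fc A i k := by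
  rw [fc]
  congr 1
  rw [cellS, Finset.sum_filter]
  refine Finset.sum_congr rfl fun x hx => ?_
  by_cases h : ‖A.mulVec x‖ = ∑ j, A i j * x j
  · rw [if_pos h, if_pos, one_mul]
    exact Finset.mem_filter.mpr ⟨hx, h⟩
  · rw [if_neg h, if_neg, zero_mul]
    intro hc
    exact h (Finset.mem_filter.mp hc).2

lemma W1_cell (i : Fin n) :
    W1 (fun x => if x ∈ cellS A i then (1:ℝ) else 0) = ∑ k, (fc A i k) ^ 2 := by
  rw [W1]
  exact Finset.sum_congr rfl fun k _ => by rw [fc_eq]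

lemma swap_helper (S : Finset (Fin n → ℝ)) (v : Fin n → ℝ) :
    ∑ k, v k * ((2 ^ n : ℝ)⁻¹ * ∑ x ∈ S, x k)
      = (2 ^ n : ℝ)⁻¹ * ∑ x ∈ S, ∑ k, v k * x k := by
  calc ∑ k, v k * ((2 ^ n : ℝ)⁻¹ * ∑ x ∈ S, x k)
      = ∑ k, ∑ x ∈ S, (2 ^ n : ℝ)⁻¹ * (v k * x k) := by
        refine Finset.sum_congr rfl fun k _ => ?_
        rw [Finset.mul_sum, Finset.mul_sum]
        exact Finset.sum_congr rfl fun x _ => by ring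
    _ = ∑ x ∈ S, ∑ k, (2 ^ n : ℝ)⁻¹ * (v k * x k) := Finset.sum_comm
    _ = (2 ^ n : ℝ)⁻¹ * ∑ x ∈ S, ∑ k, v k * x k := by
        rw [Finset.mul_sum]
        refine Finset.sum_congr rfl fun x _ => ?_
        rw [Finset.mul_sum]

lemma inner_fc (i : Fin n) :
    ∑ k, A i k * fc A i k = (2 ^ n : ℝ)⁻¹ * ∑ x ∈ cellS A i, ∑ k, A i k * x k := by
  simp only [fc]
  exact swap_helper _ _

lemma beta_eq (h2 : 2 ≤ n) (htie : TieFree A) :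
    badBeta A = 2 * ∑ i, ∑ k, A i k * fc A i k := by
  rw [badBeta, sum_cube_eq_two_mul h2 htie _ (fun x => by rw [Matrix.mulVec_neg, norm_neg])]
  have hcell : ∀ i, ∑ x ∈ cellS A i, ‖A.mulVec x‖ = ∑ x ∈ cellS A i, ∑ k, A i k * x k :=
    fun i => Finset.sum_congr rfl fun x hx => by
      rw [(mem_cellS.mp hx).2, mulVec_apply]
  calc (2 ^ n : ℝ)⁻¹ * (2 * ∑ i, ∑ x ∈ cellS A i, ‖A.mulVec x‖)
      = 2 * ((2 ^ n : ℝ)⁻¹ * ∑ i, ∑ x ∈ cellS A i, ∑ k, A i k * x k) := by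
        simp only [hcell]; ring
    _ = 2 * ∑ i, (2 ^ n : ℝ)⁻¹ * ∑ x ∈ cellS A i, ∑ k, A i k * x k := by
        rw [Finset.mul_sum]
    _ = 2 * ∑ i, ∑ k, A i k * fc A i k := by
        congr 1
        exact Finset.sum_congr rfl fun i _ => (inner_fc A i).symm

lemma cs_bound (i : Fin n) (hrow : ∑ k, (A i k) ^ 2 = 1) :
    ∑ k, A i k * fc A i k ≤ Real.sqrt (∑ k, (fc A i k) ^ 2) := by
  have h := Finset.sum_mul_sq_le_sq_mul_sq Finset.univ (fun k => A i k) (fun k => fc A i k)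
  have h2 : (∑ k, A i k * fc A i k) ^ 2 ≤ ∑ k, (fc A i k) ^ 2 := by
    calc (∑ k, A i k * fc A i k) ^ 2 ≤ (∑ k, (A i k)^2) * ∑ k, (fc A i k)^2 := h
      _ = ∑ k, (fc A i k) ^ 2 := by rw [hrow, one_mul]
  calc ∑ k, A i k * fc A i k ≤ |∑ k, A i k * fc A i k| := le_abs_self _
    _ = Real.sqrt ((∑ k, A i k * fc A i k) ^ 2) := (Real.sqrt_sq_eq_abs _).symm
    _ ≤ Real.sqrt (∑ k, (fc A i k) ^ 2) := Real.sqrt_le_sqrt h2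

lemma sqrt_W1_bound (i : Fin n) {t : ℝ} (ht : 0 < t) :
    Real.sqrt (∑ k, (fc A i k) ^ 2)
      ≤ t * ((2 ^ n : ℝ)⁻¹ * (cellS A i).card) + Real.exp (-(t ^ 2) / 2) / t := by
  set w := Real.sqrt (∑ k, (fc A i k) ^ 2) with hw
  have hw0 : 0 ≤ w := Real.sqrt_nonneg _
  rcases eq_or_lt_of_le hw0 with h | h
  · rw [← h]
    have : 0 < Real.exp (-(t ^ 2) / 2) / t := by positivity
    positivity
  · have hw2 : w ^ 2 = ∑ k, (fc A i k) ^ 2 := Real.sq_sqrt (by positivity)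
    set u : Fin n → ℝ := fun k => fc A i k / w with hu
    have hu1 : ∑ k, (u k) ^ 2 ≤ 1 := by
      have : ∑ k, (u k) ^ 2 = (∑ k, (fc A i k) ^ 2) / w ^ 2 := by
        rw [Finset.sum_div]
        exact Finset.sum_congr rfl fun k _ => by rw [hu]; ring
      rw [this, ← hw2, div_self (by positivity)]
    have hkey : w = (2 ^ n : ℝ)⁻¹ * ∑ x ∈ cellS A i, (∑ k, u k * x k) := by
      have h1 : ∑ k, u k * fc A i k = w := by
        have : ∑ k, u k * fc A i k = (∑ k, (fc A i k) ^ 2) / w := by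
          rw [Finset.sum_div]
          exact Finset.sum_congr rfl fun k _ => by rw [hu]; ring
        rw [this, ← hw2, pow_two, mul_div_assoc, div_self (ne_of_gt h), mul_one]
      rw [← h1]
      simp only [fc]
      exact swap_helper _ _
    rw [hkey]
    exact truncation_bound (Finset.filter_subset _ _) u hu1 ht
end fourier

lemma main_bounds {n : ℕ} (hn : 3 ≤ n) (A : Matrix (Fin n) (Fin n) ℝ)
    (hrow : ∀ i, ∑ j, (A i j) ^ 2 = 1) (htie : TieFree A)
    (hbeta : Real.sqrt (2 * Real.log (2 * (n : ℝ))) -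
        Real.log (Real.log (2 * (n : ℝ))) / Real.sqrt (2 * Real.log (2 * (n : ℝ))) ≤
          badBeta A) :
    (2 * Real.log (2 * (n : ℝ)) - Real.log (Real.log (2 * (n : ℝ)))) /
        (2 * Real.log (2 * (n : ℝ)) + Real.log (Real.log (2 * (n : ℝ)))
          + 1 / Real.log (2 * (n : ℝ)))
      ≤ badBeta A /
        (2 * ∑ i : Fin n, Real.sqrt (W1 (fun x => if x ∈ cellS A i then (1 : ℝ) else 0)))
    ∧ badBeta A /
        (2 * ∑ i : Fin n, Real.sqrt (W1 (fun x => if x ∈ cellS A i then (1 : ℝ) else 0)))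
      ≤ 1 := by
  have h2 : 2 ≤ n := by omega
  have hnR : (6 : ℝ) ≤ 2 * (n : ℝ) := by
    have : (3 : ℝ) ≤ (n : ℝ) := by exact_mod_cast hn
    linarith
  set L : ℝ := Real.log (2 * (n : ℝ)) with hLdef
  have hL1 : 1 < L := by
    have h6 : (1 : ℝ) < Real.log 6 := by
      rw [show (1:ℝ) = Real.log (Real.exp 1) by rw [Real.log_exp]]
      refine Real.log_lt_log (Real.exp_pos 1) ?_
      have := Real.exp_one_lt_d9
      linarith
    calc (1:ℝ) < Real.log 6 := h6
      _ ≤ L := Real.log_le_log (by norm_num) hnR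
  have hLpos : 0 < L := by linarith
  have hlogL : 0 < Real.log L := Real.log_pos hL1
  set s : ℝ := Real.sqrt (2 * L) with hsdef
  have hs2 : s ^ 2 = 2 * L := Real.sq_sqrt (by linarith)
  have hspos : 0 < s := Real.sqrt_pos.mpr (by linarith)
  set t : ℝ := Real.sqrt (2 * L + 2 * Real.log L) with htdef
  have ht2 : t ^ 2 = 2 * L + 2 * Real.log L := Real.sq_sqrt (by positivity)
  have htpos : 0 < t := Real.sqrt_pos.mpr (by positivity)
  have hst : s ≤ t := Real.sqrt_le_sqrt (by linarith)
  -- exp value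
  have hexp : Real.exp (-(t ^ 2) / 2) = ((2 * (n : ℝ)) * L)⁻¹ := by
    rw [ht2]
    have : -(2 * L + 2 * Real.log L) / 2 = -(L + Real.log L) := by ring
    rw [this, Real.exp_neg, Real.exp_add, Real.exp_log (by linarith : (0:ℝ) < 2 * (n:ℝ)),
      Real.exp_log hLpos]
  -- sum of cell densities
  have hαsum : ∑ i : Fin n, ((2 ^ n : ℝ)⁻¹ * ((cellS A i).card : ℝ)) = 1 / 2 := by
    have hc := sum_card_cells h2 htie
    have hcR : (2 : ℝ) * ∑ i : Fin n, ((cellS A i).card : ℝ) = 2 ^ n := by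
      exact_mod_cast hc
    rw [← Finset.mul_sum]
    have h2n : (0 : ℝ) < 2 ^ n := by positivity
    field_simp
    linarith
  set D : ℝ := 2 * ∑ i : Fin n, Real.sqrt (W1 (fun x => if x ∈ cellS A i then (1 : ℝ) else 0))
    with hDdef
  have hDfc : D = 2 * ∑ i : Fin n, Real.sqrt (∑ k, (fc A i k) ^ 2) := by
    rw [hDdef]
    congr 1
    exact Finset.sum_congr rfl fun i _ => by rw [W1_cell]
  -- beta ≤ D
  have hbD : badBeta A ≤ D := by
    rw [beta_eq A h2 htie, hDfc]
    have := Finset.sum_le_sum fun i (_ : i ∈ (univ : Finset (Fin n))) => cs_bound A i (hrow i)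
    linarith
  -- D ≤ t + 1/(L*t)
  have hDub : D ≤ t + 1 / (L * t) := by
    rw [hDfc]
    have hsum : ∑ i : Fin n, Real.sqrt (∑ k, (fc A i k) ^ 2)
        ≤ ∑ i : Fin n, (t * ((2 ^ n : ℝ)⁻¹ * (cellS A i).card)
            + Real.exp (-(t ^ 2) / 2) / t) :=
      Finset.sum_le_sum fun i _ => sqrt_W1_bound A i htpos
    have hrhs : ∑ i : Fin n, (t * ((2 ^ n : ℝ)⁻¹ * (cellS A i).card)
          + Real.exp (-(t ^ 2) / 2) / t)
        = t / 2 + (n : ℝ) * (Real.exp (-(t ^ 2) / 2) / t) := by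
      rw [Finset.sum_add_distrib, ← Finset.mul_sum, hαsum, Finset.sum_const]
      simp
      ring
    have hnpos : (0 : ℝ) < (n : ℝ) := by positivity
    have hn2 : (n : ℝ) * (Real.exp (-(t ^ 2) / 2) / t) = 1 / (2 * L * t) := by
      rw [hexp]
      field_simp
    have : ∑ i : Fin n, Real.sqrt (∑ k, (fc A i k) ^ 2) ≤ t / 2 + 1 / (2 * L * t) := by
      rw [← hn2]; exact hsum.trans (le_of_eq hrhs)
    have h1 : 1 / (2 * L * t) = (1 / (L * t)) / 2 := by ring
    linarith
  -- t + 1/(L*t) ≤ (2L + log L + 1/L)/s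
  have hDub2 : t + 1 / (L * t) ≤ (2 * L + Real.log L + 1 / L) / s := by
    have h1 : t ≤ s + Real.log L / s := by
      have hrhs : 0 ≤ s + Real.log L / s := by positivity
      have : 2 * L + 2 * Real.log L ≤ (s + Real.log L / s) ^ 2 := by
        have : (s + Real.log L / s) ^ 2 = s ^ 2 + 2 * Real.log L + (Real.log L / s) ^ 2 := by
          field_simp
          ring
        rw [this, hs2]
        nlinarith [sq_nonneg (Real.log L / s)]
      calc t = Real.sqrt (2 * L + 2 * Real.log L) := htdef
        _ ≤ Real.sqrt ((s + Real.log L / s) ^ 2) := Real.sqrt_le_sqrt this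
        _ = s + Real.log L / s := Real.sqrt_sq hrhs
    have h2' : 1 / (L * t) ≤ 1 / (L * s) := by
      have hLs : 0 < L * s := mul_pos hLpos hspos
      have hLt : L * s ≤ L * t := mul_le_mul_of_nonneg_left hst hLpos.le
      exact one_div_le_one_div_of_le hLs hLt
    have h2Ls : 2 * L / s = s := by
      rw [div_eq_iff (ne_of_gt hspos), ← hs2]
      ring
    have h3 : s + Real.log L / s + 1 / (L * s) = (2 * L + Real.log L + 1 / L) / s := by
      have hsplit : (2 * L + Real.log L + 1 / L) / s = 2 * L / s + Real.log L / s + 1 / L / s := by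
        ring
      rw [hsplit, h2Ls, div_div]
    linarith
  -- numerator lower bound
  have hNlb : (2 * L - Real.log L) / s ≤ badBeta A := by
    have : s - Real.log L / s = (2 * L - Real.log L) / s := by
      rw [sub_div]
      congr 1
      rw [eq_comm, div_eq_iff (ne_of_gt hspos), ← hs2]
      ring
    rw [← this]
    exact hbeta
  have hNpos : 0 < (2 * L - Real.log L) / s := by
    have : Real.log L ≤ L - 1 := Real.log_le_sub_one_of_pos hLpos
    apply div_pos _ hspos
    linarith
  have hDpos : 0 < D := lt_of_lt_of_le (lt_of_lt_of_le hNpos hNlb) hbD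
  constructor
  · have hD2pos : (0:ℝ) < 2 * L + Real.log L + 1 / L := by positivity
    calc (2 * L - Real.log L) / (2 * L + Real.log L + 1 / L)
        = ((2 * L - Real.log L) / s) / ((2 * L + Real.log L + 1 / L) / s) := by
          rw [div_div_div_cancel_right₀]
          exact ne_of_gt hspos
      _ ≤ badBeta A / D :=
          div_le_div₀ (hNpos.le.trans hNlb) hNlb hDpos (hDub.trans hDub2)
  · exact div_le_one_of_le₀ hbD hDpos.le

open Filter in
lemma lower_tendsto :
    Tendsto (fun n : ℕ => (2 * Real.log (2 * (n : ℝ)) - Real.log (Real.log (2 * (n : ℝ)))) /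
        (2 * Real.log (2 * (n : ℝ)) + Real.log (Real.log (2 * (n : ℝ)))
          + 1 / Real.log (2 * (n : ℝ)))) atTop (nhds 1) := by
  have hL : Tendsto (fun n : ℕ => Real.log (2 * (n : ℝ))) atTop atTop := by
    refine Real.tendsto_log_atTop.comp ?_
    exact Tendsto.const_mul_atTop (by norm_num) tendsto_natCast_atTop_atTop
  have hφ : Tendsto (fun Lv : ℝ => (2 * Lv - Real.log Lv) /
      (2 * Lv + Real.log Lv + 1 / Lv)) atTop (nhds 1) := by
    have hlog : Tendsto (fun Lv : ℝ => Real.log Lv / Lv) atTop (nhds 0) :=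
      Real.isLittleO_log_id_atTop.tendsto_div_nhds_zero
    have hsq : Tendsto (fun Lv : ℝ => Lv ^ 2) atTop atTop :=
      tendsto_pow_atTop (two_ne_zero)
    have hinv2 : Tendsto (fun Lv : ℝ => (Lv ^ 2)⁻¹) atTop (nhds 0) := by
      exact tendsto_inv_atTop_zero.comp hsq
    have hnum : Tendsto (fun Lv : ℝ => 2 - Real.log Lv / Lv) atTop (nhds 2) := by
      simpa using tendsto_const_nhds.sub hlog
    have hden : Tendsto (fun Lv : ℝ => 2 + Real.log Lv / Lv + (Lv ^ 2)⁻¹) atTop (nhds 2) := by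
      have h := ((tendsto_const_nhds (x := (2:ℝ))).add hlog).add hinv2
      simpa using h
    have hquot : Tendsto (fun Lv : ℝ => (2 - Real.log Lv / Lv) /
        (2 + Real.log Lv / Lv + (Lv ^ 2)⁻¹)) atTop (nhds 1) := by
      have := hnum.div hden (by norm_num)
      rw [div_self (two_ne_zero)] at this
      exact this
    refine hquot.congr' ?_
    filter_upwards [eventually_ge_atTop (1 : ℝ)] with Lv hLv
    have hLpos : (0 : ℝ) < Lv := by linarith
    have hlognn : 0 ≤ Real.log Lv := Real.log_nonneg hLv
    have hd1 : (0:ℝ) < 2 + Real.log Lv / Lv + (Lv ^ 2)⁻¹ := by positivity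
    have hd2 : (0:ℝ) < 2 * Lv + Real.log Lv + 1 / Lv := by positivity
    rw [div_eq_div_iff (ne_of_gt hd1) (ne_of_gt hd2)]
    field_simp
  exact hφ.comp hL

theorem stmt7 (A : (n : ℕ) → Matrix (Fin n) (Fin n) ℝ)
    (hrow : ∀ n : ℕ, 3 ≤ n → ∀ i, ∑ j, (A n i j) ^ 2 = 1)
    (htie : ∀ n : ℕ, 3 ≤ n → TieFree (A n))
    (hbeta : ∀ n : ℕ, 3 ≤ n →
      Real.sqrt (2 * Real.log (2 * (n : ℝ))) -
        Real.log (Real.log (2 * (n : ℝ))) / Real.sqrt (2 * Real.log (2 * (n : ℝ))) ≤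
          badBeta (A n)) :
    Filter.Tendsto (fun n : ℕ => badBeta (A n) /
        (2 * ∑ i : Fin n, Real.sqrt (W1 (fun x => if x ∈ cellS (A n) i then (1 : ℝ) else 0))))
      Filter.atTop (nhds 1) := by
  refine tendsto_of_tendsto_of_tendsto_of_le_of_le' lower_tendsto tendsto_const_nhds ?_ ?_
  · filter_upwards [Filter.eventually_ge_atTop 3] with n hn
    exact (main_bounds hn (A n) (hrow n hn) (htie n hn) (hbeta n hn)).1
  · filter_upwards [Filter.eventually_ge_atTop 3] with n hn
    exact (main_bounds hn (A n) (hrow n hn) (htie n hn) (hbeta n hn)).2
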